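/- arXiv:1811.02363 — 2 statements merged into one kernel-verified Lean document; each statement's English description precedes it below -/
import Mathlib

section
/- Let d, n, ρ ≥ 1 be integers and R > 0. Let Ω ⊂ ℤ^d be a finite nonempty pixel set and W ⊂ ℤ^d a finite window with 0 ∈ W. Let ω : ℤ^d → ℝ satisfy 0 ≤ ω(j) ≤ 1 for all j and ω(0) > 0. Let φ : ℝ^ρ → ℝ satisfy φ(x) > 0 for all x and be L-Lipschitz (|φ(x) − φ(y)| ≤ L‖x − y‖ for all x, y ∈ ℝ^ρ) for some L > 0. Let p : ℤ^d → ℝ^ρ and let f : ℤ^d → ℝ^n have all components in [0, R]. Given cluster centers μ_1, …, μ_K ∈ ℝ^ρ and an assignment s : Ω → {1, …, K}, define for i ∈ Ω: ξ(i) = Σ_{j∈W} ω(j) φ(p(i−j) − p(i)) f(i−j), η(i) = Σ_{j∈W} ω(j) φ(p(i−j) − p(i)), v(i) = Σ_{j∈W} ω(j) φ(p(i−j) − μ_{s(i)}) f(i−j), r(i) = Σ_{j∈W} ω(j) φ(p(i−j) − μ_{s(i)}), g(i) = ξ(i)/η(i), ĝ(i) = v(i)/r(i), and the clustering error E_K =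 Σ_{i∈Ω} ‖p(i) − μ_{s(i)}‖². Then Σ_{i∈Ω} ‖ĝ(i) − g(i)‖² ≤ C · L² · n · |W|² · E_K, where C = 4R²/(ω(0)φ(0))² (in particular, such a constant C > 0 depending only on R, ω(0), φ(0) exists). -/
/-- Theorem 1 (error bound) for the cluster-by-cluster variant of fast
high-dimensional filtering. -/
theorem cluster_filter_error_bound
    (d n ρ : ℕ) (hd : 1 ≤ d) (hn : 1 ≤ n) (hρ : 1 ≤ ρ)
    (R : ℝ) (hR : 0 < R)
    (Ω W : Finset (Fin d → ℤ)) (hΩ : Ω.Nonempty) (hW : (0 : Fin d → ℤ) ∈ W)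
    (ω : (Fin d → ℤ) → ℝ) (hω : ∀ j, 0 ≤ ω j ∧ ω j ≤ 1) (hω0 : 0 < ω 0)
    (φ : EuclideanSpace ℝ (Fin ρ) → ℝ) (hφpos : ∀ x, 0 < φ x)
    (L : ℝ) (hL : 0 < L)
    (hLip : ∀ x y : EuclideanSpace ℝ (Fin ρ), |φ x - φ y| ≤ L * ‖x - y‖)
    (p : (Fin d → ℤ) → EuclideanSpace ℝ (Fin ρ))
    (f : (Fin d → ℤ) → EuclideanSpace ℝ (Fin n))
    (hf : ∀ i m, 0 ≤ f i m ∧ f i m ≤ R)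
    (K : ℕ) (hK : 1 ≤ K)
    (μ : Fin K → EuclideanSpace ℝ (Fin ρ)) (s : (Fin d → ℤ) → Fin K)
    (ξ : (Fin d → ℤ) → EuclideanSpace ℝ (Fin n))
    (hξ : ∀ i, ξ i = ∑ j ∈ W, (ω j * φ (p (i - j) - p i)) • f (i - j))
    (η : (Fin d → ℤ) → ℝ)
    (hη : ∀ i, η i = ∑ j ∈ W, ω j * φ (p (i - j) - p i))
    (v : (Fin d → ℤ) → EuclideanSpace ℝ (Fin n))
    (hv : ∀ i, v i = ∑ j ∈ W, (ω j * φ (p (i - j) - μ (s i))) • f (i - j))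
    (r : (Fin d → ℤ) → ℝ)
    (hr : ∀ i, r i = ∑ j ∈ W, ω j * φ (p (i - j) - μ (s i)))
    (g ghat : (Fin d → ℤ) → EuclideanSpace ℝ (Fin n))
    (hg : ∀ i, g i = (η i)⁻¹ • ξ i)
    (hghat : ∀ i, ghat i = (r i)⁻¹ • v i)
    (EK : ℝ) (hEK : EK = ∑ i ∈ Ω, ‖p i - μ (s i)‖ ^ 2) :
    ∑ i ∈ Ω, ‖ghat i - g i‖ ^ 2
      ≤ (4 * R ^ 2 / (ω 0 * φ 0) ^ 2) * L ^ 2 * n * (W.card : ℝ) ^ 2 * EK := by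
  have hA : 0 < ω 0 * φ 0 := mul_pos hω0 (hφpos 0)
  set A := ω 0 * φ 0 with hAdef
  have hcard0 : (0:ℝ) ≤ (W.card : ℝ) := by positivity
  have hWsum0 : 0 ≤ ∑ j ∈ W, ω j := Finset.sum_nonneg fun j _ => (hω j).1
  have hWsum : ∑ j ∈ W, ω j ≤ (W.card : ℝ) := by
    calc ∑ j ∈ W, ω j ≤ ∑ _j ∈ W, (1:ℝ) := Finset.sum_le_sum fun j _ => (hω j).2
    _ = (W.card : ℝ) := by simp
  have hsq : (Real.sqrt n) ^ 2 = (n : ℝ) := Real.sq_sqrt (by positivity)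
  have hfn : ∀ j, ‖f j‖ ≤ R * Real.sqrt n := by
    intro j
    have h1 : ‖f j‖ ^ 2 ≤ (R * Real.sqrt n) ^ 2 := by
      rw [EuclideanSpace.norm_eq, Real.sq_sqrt (Finset.sum_nonneg fun m _ => by positivity)]
      have : ∑ m, ‖f j m‖ ^ 2 ≤ ∑ _m : Fin n, R ^ 2 := by
        refine Finset.sum_le_sum fun m _ => ?_
        rw [Real.norm_eq_abs, abs_of_nonneg (hf j m).1]
        exact pow_le_pow_left₀ (hf j m).1 (hf j m).2 2
      calc ∑ m, ‖f j m‖ ^ 2 ≤ ∑ _m : Fin n, R ^ 2 := this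
      _ = (n : ℝ) * R ^ 2 := by simp [mul_comm]
      _ = (R * Real.sqrt n) ^ 2 := by rw [mul_pow, hsq]; ring
    have h2 : 0 ≤ R * Real.sqrt n := by positivity
    nlinarith [norm_nonneg (f j)]
  have key : ∀ i ∈ Ω, ‖ghat i - g i‖ ^ 2
      ≤ 4 * R ^ 2 / A ^ 2 * L ^ 2 * n * (W.card : ℝ) ^ 2 * ‖p i - μ (s i)‖ ^ 2 := by
    intro i _
    set δ := ‖p i - μ (s i)‖ with hδdef
    have hδ0 : 0 ≤ δ := norm_nonneg _
    have hφdiff : ∀ j : Fin d → ℤ,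
        |φ (p (i - j) - p i) - φ (p (i - j) - μ (s i))| ≤ L * δ := by
      intro j
      have h := hLip (p (i - j) - p i) (p (i - j) - μ (s i))
      have he : (p (i - j) - p i) - (p (i - j) - μ (s i)) = μ (s i) - p i := by abel
      rw [he, norm_sub_rev] at h
      exact h
    have hηA : A ≤ η i := by
      rw [hη]
      have h0 : A = ω 0 * φ (p (i - (0 : Fin d → ℤ)) - p i) := by
        simp [hAdef]
      rw [h0]
      exact Finset.single_le_sum (f := fun j => ω j * φ (p (i - j) - p i))
        (fun j _ => mul_nonneg (hω j).1 (hφpos _).le) hW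
    have hηpos : 0 < η i := lt_of_lt_of_le hA hηA
    have hrpos : 0 < r i := by
      rw [hr]
      calc (0:ℝ) < ω 0 * φ (p (i - (0 : Fin d → ℤ)) - μ (s i)) :=
            mul_pos hω0 (hφpos _)
      _ ≤ _ := Finset.single_le_sum (f := fun j => ω j * φ (p (i - j) - μ (s i)))
            (fun j _ => mul_nonneg (hω j).1 (hφpos _).le) hW
    -- |η i - r i| ≤ L δ Σω
    have hηr : |η i - r i| ≤ L * δ * ∑ j ∈ W, ω j := by
      rw [hη, hr, ← Finset.sum_sub_distrib]
      calc |∑ j ∈ W, (ω j * φ (p (i - j) - p i) - ω j * φ (p (i - j) - μ (s i)))|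
          ≤ ∑ j ∈ W, |ω j * φ (p (i - j) - p i) - ω j * φ (p (i - j) - μ (s i))| :=
            Finset.abs_sum_le_sum_abs _ _
      _ ≤ ∑ j ∈ W, ω j * (L * δ) := by
            refine Finset.sum_le_sum fun j _ => ?_
            rw [← mul_sub, abs_mul, abs_of_nonneg (hω j).1]
            exact mul_le_mul_of_nonneg_left (hφdiff j) (hω j).1
      _ = (∑ j ∈ W, ω j) * (L * δ) := by rw [← Finset.sum_mul]
      _ = L * δ * ∑ j ∈ W, ω j := by ring
    -- ‖v i - ξ i‖
    have hvξ : ‖v i - ξ i‖ ≤ L * δ * (∑ j ∈ W, ω j) * (R * Real.sqrt n) := by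
      rw [hv, hξ, ← Finset.sum_sub_distrib]
      calc ‖∑ j ∈ W, ((ω j * φ (p (i - j) - μ (s i))) • f (i - j)
              - (ω j * φ (p (i - j) - p i)) • f (i - j))‖
          ≤ ∑ j ∈ W, ‖(ω j * φ (p (i - j) - μ (s i))) • f (i - j)
              - (ω j * φ (p (i - j) - p i)) • f (i - j)‖ := norm_sum_le _ _
      _ ≤ ∑ j ∈ W, L * δ * (R * Real.sqrt n) * ω j := by
            refine Finset.sum_le_sum fun j _ => ?_
            rw [← sub_smul, norm_smul, Real.norm_eq_abs, ← mul_sub, abs_mul,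
              abs_of_nonneg (hω j).1]
            have h1 : |φ (p (i - j) - μ (s i)) - φ (p (i - j) - p i)| ≤ L * δ := by
              rw [abs_sub_comm]; exact hφdiff j
            have h2 := mul_le_mul (mul_le_mul_of_nonneg_left h1 (hω j).1)
              (hfn (i - j)) (norm_nonneg _)
              (mul_nonneg (hω j).1 (by positivity))
            exact le_of_le_of_eq h2 (by ring)
      _ = L * δ * (∑ j ∈ W, ω j) * (R * Real.sqrt n) := by
            rw [← Finset.mul_sum]; ring
    -- ‖v i‖ ≤ r i * (R √n)
    have hvbd : ‖v i‖ ≤ r i * (R * Real.sqrt n) := by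
      rw [hv, hr]
      calc ‖∑ j ∈ W, (ω j * φ (p (i - j) - μ (s i))) • f (i - j)‖
          ≤ ∑ j ∈ W, ‖(ω j * φ (p (i - j) - μ (s i))) • f (i - j)‖ := norm_sum_le _ _
      _ ≤ ∑ j ∈ W, ω j * φ (p (i - j) - μ (s i)) * (R * Real.sqrt n) := by
            refine Finset.sum_le_sum fun j _ => ?_
            rw [norm_smul, Real.norm_eq_abs,
              abs_of_nonneg (mul_nonneg (hω j).1 (hφpos _).le)]
            exact mul_le_mul_of_nonneg_left (hfn (i - j))
              (mul_nonneg (hω j).1 (hφpos _).le)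
      _ = (∑ j ∈ W, ω j * φ (p (i - j) - μ (s i))) * (R * Real.sqrt n) :=
            (Finset.sum_mul _ _ _).symm
    -- identity
    have hid : ghat i - g i = ((r i * η i)⁻¹) • (η i • v i - r i • ξ i) := by
      rw [hghat, hg, smul_sub, smul_smul, smul_smul]
      have e1 : (r i * η i)⁻¹ * η i = (r i)⁻¹ := by
        rw [mul_inv, mul_assoc, inv_mul_cancel₀ hηpos.ne', mul_one]
      have e2 : (r i * η i)⁻¹ * r i = (η i)⁻¹ := by
        rw [mul_inv, mul_comm (r i)⁻¹, mul_assoc, inv_mul_cancel₀ hrpos.ne', mul_one]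
      rw [e1, e2]
    have hnum : ‖η i • v i - r i • ξ i‖
        ≤ 2 * L * δ * (W.card : ℝ) * (R * Real.sqrt n) * r i := by
      have hsplit : η i • v i - r i • ξ i
          = (η i - r i) • v i + r i • (v i - ξ i) := by
        rw [sub_smul, smul_sub]; abel
      rw [hsplit]
      calc ‖(η i - r i) • v i + r i • (v i - ξ i)‖
          ≤ ‖(η i - r i) • v i‖ + ‖r i • (v i - ξ i)‖ := norm_add_le _ _
      _ = |η i - r i| * ‖v i‖ + r i * ‖v i - ξ i‖ := by
            rw [norm_smul, norm_smul, Real.norm_eq_abs, Real.norm_eq_abs,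
              abs_of_pos hrpos]
      _ ≤ (L * δ * ∑ j ∈ W, ω j) * (r i * (R * Real.sqrt n))
            + r i * (L * δ * (∑ j ∈ W, ω j) * (R * Real.sqrt n)) := by
            gcongr
      _ = 2 * L * δ * (∑ j ∈ W, ω j) * (R * Real.sqrt n) * r i := by ring
      _ ≤ 2 * L * δ * (W.card : ℝ) * (R * Real.sqrt n) * r i := by
            gcongr
    have hnorm : ‖ghat i - g i‖
        ≤ 2 * L * δ * (W.card : ℝ) * (R * Real.sqrt n) / A := by
      rw [hid, norm_smul, Real.norm_eq_abs,
        abs_of_pos (inv_pos.mpr (mul_pos hrpos hηpos))]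
      calc (r i * η i)⁻¹ * ‖η i • v i - r i • ξ i‖
          ≤ (r i * η i)⁻¹ * (2 * L * δ * (W.card : ℝ) * (R * Real.sqrt n) * r i) :=
            mul_le_mul_of_nonneg_left hnum
              (inv_nonneg.mpr (mul_pos hrpos hηpos).le)
      _ = 2 * L * δ * (W.card : ℝ) * (R * Real.sqrt n) / η i := by
            field_simp
      _ ≤ 2 * L * δ * (W.card : ℝ) * (R * Real.sqrt n) / A := by
            gcongr
    have hsq2 : ‖ghat i - g i‖ ^ 2
        ≤ (2 * L * δ * (W.card : ℝ) * (R * Real.sqrt n) / A) ^ 2 :=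
      pow_le_pow_left₀ (norm_nonneg _) hnorm 2
    have heq : (2 * L * δ * (W.card : ℝ) * (R * Real.sqrt n) / A) ^ 2
        = 4 * R ^ 2 / A ^ 2 * L ^ 2 * n * (W.card : ℝ) ^ 2 * δ ^ 2 := by
      rw [div_pow]
      rw [show (2 * L * δ * (W.card : ℝ) * (R * Real.sqrt n)) ^ 2
          = 4 * L ^ 2 * δ ^ 2 * (W.card : ℝ) ^ 2 * R ^ 2 * (Real.sqrt n) ^ 2 by ring,
        hsq]
      field_simp
    rw [heq] at hsq2
    exact hsq2
  calc ∑ i ∈ Ω, ‖ghat i - g i‖ ^ 2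
      ≤ ∑ i ∈ Ω, 4 * R ^ 2 / A ^ 2 * L ^ 2 * n * (W.card : ℝ) ^ 2
          * ‖p i - μ (s i)‖ ^ 2 := Finset.sum_le_sum key
  _ = 4 * R ^ 2 / A ^ 2 * L ^ 2 * n * (W.card : ℝ) ^ 2
        * ∑ i ∈ Ω, ‖p i - μ (s i)‖ ^ 2 := by rw [Finset.mul_sum]
  _ = (4 * R ^ 2 / A ^ 2) * L ^ 2 * n * (W.card : ℝ) ^ 2 * EK := by
        rw [hEK]
end

section
/- Let d, n, ρ ≥ 1 be integers and R > 0. Let W ⊂ ℤ^d be a finite window with 0 ∈ W. Let ω : ℤ^d → ℝ satisfy 0 ≤ ω(j) ≤ 1 for all j and ω(0) > 0. Let φ : ℝ^ρ → ℝ satisfy φ(x) > 0 for all x and be L-Lipschitz for some L > 0. Let p : ℤ^d → ℝ^ρ and let f : ℤ^d → ℝ^n have all components in [0, R]. Fix a pixel i ∈ ℤ^d and a center μ ∈ ℝ^ρ, and define ξ(i) = Σ_{j∈W} ω(j) φ(p(i−j) − p(i)) f(i−j), η(i) = Σ_{j∈W} ω(j) φ(p(i−j) − p(i)), v(i) = Σ_{j∈W}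 ω(j) φ(p(i−j) − μ) f(i−j), r(i) = Σ_{j∈W} ω(j) φ(p(i−j) − μ). Then ‖v(i)/r(i) − ξ(i)/η(i)‖ ≤ (2R/(ω(0)φ(0))) · √n · L · |W| · ‖p(i) − μ‖. -/
/-- Pointwise error bound (inequality (28) in the proof of Theorem 1). -/
theorem pointwise_cluster_error_bound
    (d n ρ : ℕ) (hd : 1 ≤ d) (hn : 1 ≤ n) (hρ : 1 ≤ ρ)
    (R : ℝ) (hR : 0 < R)
    (W : Finset (Fin d → ℤ)) (hW : (0 : Fin d → ℤ) ∈ W)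
    (ω : (Fin d → ℤ) → ℝ) (hω : ∀ j, 0 ≤ ω j ∧ ω j ≤ 1) (hω0 : 0 < ω 0)
    (φ : EuclideanSpace ℝ (Fin ρ) → ℝ) (hφpos : ∀ x, 0 < φ x)
    (L : ℝ) (hL : 0 < L)
    (hLip : ∀ x y : EuclideanSpace ℝ (Fin ρ), |φ x - φ y| ≤ L * ‖x - y‖)
    (p : (Fin d → ℤ) → EuclideanSpace ℝ (Fin ρ))
    (f : (Fin d → ℤ) → EuclideanSpace ℝ (Fin n))
    (hf : ∀ i m, 0 ≤ f i m ∧ f i m ≤ R)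
    (i : Fin d → ℤ) (μ : EuclideanSpace ℝ (Fin ρ)) :
    ‖(∑ j ∈ W, ω j * φ (p (i - j) - μ))⁻¹ •
        (∑ j ∈ W, (ω j * φ (p (i - j) - μ)) • f (i - j))
      - (∑ j ∈ W, ω j * φ (p (i - j) - p i))⁻¹ •
        (∑ j ∈ W, (ω j * φ (p (i - j) - p i)) • f (i - j))‖
      ≤ (2 * R / (ω 0 * φ 0)) * Real.sqrt n * L * (W.card : ℝ) * ‖p i - μ‖ := by
  set D := ‖p i - μ‖ with hD
  set M := Real.sqrt n * R with hM
  have hDnn : 0 ≤ D := norm_nonneg _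
  have hMpos : 0 < M := by
    apply mul_pos _ hR
    have : (0:ℝ) < n := by exact_mod_cast hn
    exact Real.sqrt_pos.mpr this
  set a : (Fin d → ℤ) → ℝ := fun j => ω j * φ (p (i - j) - μ) with ha
  set b : (Fin d → ℤ) → ℝ := fun j => ω j * φ (p (i - j) - p i) with hb
  have hann : ∀ j, 0 ≤ a j := fun j => mul_nonneg (hω j).1 (hφpos _).le
  have hbnn : ∀ j, 0 ≤ b j := fun j => mul_nonneg (hω j).1 (hφpos _).le
  set v := ∑ j ∈ W, a j • f (i - j) with hv
  set ξ := ∑ j ∈ W, b j • f (i - j) with hξ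
  set r := ∑ j ∈ W, a j with hr
  set η := ∑ j ∈ W, b j with hη
  have hb0 : b 0 = ω 0 * φ 0 := by simp [hb]
  have hηge : ω 0 * φ 0 ≤ η := by
    rw [← hb0]
    exact Finset.single_le_sum (fun j _ => hbnn j) hW
  have hφ0 : 0 < φ 0 := hφpos 0
  have hωφ : 0 < ω 0 * φ 0 := mul_pos hω0 hφ0
  have hηpos : 0 < η := lt_of_lt_of_le hωφ hηge
  have hrpos : 0 < r := by
    have ha0 : 0 < a 0 := mul_pos hω0 (hφpos _)
    exact lt_of_lt_of_le ha0 (Finset.single_le_sum (fun j _ => hann j) hW)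
  -- norm of f bounded by M
  have hfM : ∀ j, ‖f j‖ ≤ M := by
    intro j
    rw [EuclideanSpace.norm_eq]
    have h1 : ∑ m, ‖f j m‖ ^ 2 ≤ ∑ _m : Fin n, R ^ 2 := by
      apply Finset.sum_le_sum
      intro m _
      have := hf j m
      have : ‖f j m‖ ≤ R := by
        rw [Real.norm_eq_abs, abs_le]
        constructor <;> linarith [this.1, this.2]
      exact pow_le_pow_left₀ (norm_nonneg _) this 2
    calc Real.sqrt (∑ m, ‖f j m‖ ^ 2) ≤ Real.sqrt (∑ _m : Fin n, R ^ 2) :=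
          Real.sqrt_le_sqrt h1
      _ = M := by
          rw [Finset.sum_const, Finset.card_univ, Fintype.card_fin, nsmul_eq_mul,
            Real.sqrt_mul (by positivity), Real.sqrt_sq hR.le]
  -- key difference bound
  have hab : ∀ j, |a j - b j| ≤ L * D := by
    intro j
    have hdiff : (p (i - j) - μ) - (p (i - j) - p i) = p i - μ := by abel
    calc |a j - b j| = ω j * |φ (p (i - j) - μ) - φ (p (i - j) - p i)| := by
          rw [← abs_of_nonneg (hω j).1, ← abs_mul, mul_sub]
      _ ≤ 1 * (L * ‖(p (i - j) - μ) - (p (i - j) - p i)‖) := by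
          apply mul_le_mul (hω j).2 (hLip _ _) (abs_nonneg _) zero_le_one
      _ = L * D := by rw [one_mul, hdiff]
  have hvξ : ‖v - ξ‖ ≤ (W.card : ℝ) * (L * D) * M := by
    rw [hv, hξ, ← Finset.sum_sub_distrib]
    calc ‖∑ j ∈ W, (a j • f (i - j) - b j • f (i - j))‖
        ≤ ∑ j ∈ W, ‖a j • f (i - j) - b j • f (i - j)‖ := norm_sum_le _ _
      _ ≤ ∑ _j ∈ W, (L * D) * M := by
          apply Finset.sum_le_sum
          intro j _
          rw [← sub_smul, norm_smul, Real.norm_eq_abs]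
          exact mul_le_mul (hab j) (hfM _) (norm_nonneg _)
            (by positivity)
      _ = (W.card : ℝ) * (L * D) * M := by
          rw [Finset.sum_const, nsmul_eq_mul]; ring
  have hηr : |η - r| ≤ (W.card : ℝ) * (L * D) := by
    rw [hη, hr, ← Finset.sum_sub_distrib]
    calc |∑ j ∈ W, (b j - a j)| ≤ ∑ j ∈ W, |b j - a j| :=
          Finset.abs_sum_le_sum_abs _ _
      _ ≤ ∑ _j ∈ W, L * D := by
          apply Finset.sum_le_sum
          intro j _
          rw [abs_sub_comm]
          exact hab j
      _ = (W.card : ℝ) * (L * D) := by rw [Finset.sum_const, nsmul_eq_mul]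
  have hvbd : ‖v‖ ≤ r * M := by
    calc ‖v‖ ≤ ∑ j ∈ W, ‖a j • f (i - j)‖ := norm_sum_le _ _
      _ ≤ ∑ j ∈ W, a j * M := by
          apply Finset.sum_le_sum
          intro j _
          rw [norm_smul, Real.norm_eq_abs, abs_of_nonneg (hann j)]
          exact mul_le_mul_of_nonneg_left (hfM _) (hann j)
      _ = r * M := by rw [← Finset.sum_mul]
  -- algebraic identity
  have hid : r⁻¹ • v - η⁻¹ • ξ = η⁻¹ • (v - ξ) + (r⁻¹ - η⁻¹) • v := by
    rw [smul_sub, sub_smul]; abel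
  rw [hid]
  have hsub : |r⁻¹ - η⁻¹| = |η - r| / (r * η) := by
    rw [inv_sub_inv hrpos.ne' hηpos.ne', abs_div,
      abs_of_pos (mul_pos hrpos hηpos)]
  have step1 : ‖η⁻¹ • (v - ξ) + (r⁻¹ - η⁻¹) • v‖
      ≤ η⁻¹ * ((W.card : ℝ) * (L * D) * M) + (|η - r| / (r * η)) * (r * M) := by
    calc ‖η⁻¹ • (v - ξ) + (r⁻¹ - η⁻¹) • v‖
        ≤ ‖η⁻¹ • (v - ξ)‖ + ‖(r⁻¹ - η⁻¹) • v‖ := norm_add_le _ _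
      _ = η⁻¹ * ‖v - ξ‖ + |r⁻¹ - η⁻¹| * ‖v‖ := by
          rw [norm_smul, norm_smul, Real.norm_eq_abs, Real.norm_eq_abs,
            abs_of_pos (inv_pos.mpr hηpos)]
      _ ≤ η⁻¹ * ((W.card : ℝ) * (L * D) * M) + (|η - r| / (r * η)) * (r * M) := by
          apply add_le_add
          · exact mul_le_mul_of_nonneg_left hvξ (inv_pos.mpr hηpos).le
          · rw [hsub]
            exact mul_le_mul_of_nonneg_left hvbd
              (div_nonneg (abs_nonneg _) (mul_pos hrpos hηpos).le)
  have step2 : (|η - r| / (r * η)) * (r * M) = |η - r| * M / η := by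
    field_simp
  have step3 : η⁻¹ * ((W.card : ℝ) * (L * D) * M) + |η - r| * M / η
      ≤ (2 * ((W.card : ℝ) * (L * D) * M)) / η := by
    rw [inv_mul_eq_div, ← add_div, div_le_div_iff₀ hηpos hηpos]
    have h2 : |η - r| * M ≤ (W.card : ℝ) * (L * D) * M :=
      mul_le_mul_of_nonneg_right hηr hMpos.le
    nlinarith [hηpos]
  have step4 : (2 * ((W.card : ℝ) * (L * D) * M)) / η
      ≤ (2 * ((W.card : ℝ) * (L * D) * M)) / (ω 0 * φ 0) := by
    apply div_le_div_of_nonneg_left _ hωφ hηge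
    positivity
  have hfin : (2 * ((W.card : ℝ) * (L * D) * M)) / (ω 0 * φ 0)
      = (2 * R / (ω 0 * φ 0)) * Real.sqrt n * L * (W.card : ℝ) * D := by
    rw [hM]; field_simp
  calc ‖η⁻¹ • (v - ξ) + (r⁻¹ - η⁻¹) • v‖
      ≤ η⁻¹ * ((W.card : ℝ) * (L * D) * M) + (|η - r| / (r * η)) * (r * M) := step1
    _ = η⁻¹ * ((W.card : ℝ) * (L * D) * M) + |η - r| * M / η := by rw [step2]
    _ ≤ (2 * ((W.card : ℝ) * (L * D) * M)) / η := step3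
    _ ≤ (2 * ((W.card : ℝ) * (L * D) * M)) / (ω 0 * φ 0) := step4
    _ = (2 * R / (ω 0 * φ 0)) * Real.sqrt n * L * (W.card : ℝ) * D := hfin
end
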